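/- arXiv:2112.13097 — 4 statements merged into one kernel-verified Lean document; each statement's English description precedes it below -/
import Mathlib

section
/- If C is an ω-compression operator, g, h ∈ ℝ^d are fixed, α = 1/(1+ω), and h' = h + α·C(g − h), then E[‖h' − g‖²] ≤ (1 − 1/(1+ω))‖h − g‖². -/
open MeasureTheory

theorem compression_shift_contraction {d : ℕ} {Ω : Type*} [MeasurableSpace Ω]
    (μ : Measure Ω) [IsProbabilityMeasure μ] (w : ℝ) (hw : 0 ≤ w)
    (C : EuclideanSpace ℝ (Fin d) → Ω → EuclideanSpace ℝ (Fin d))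
    (hCmean : ∀ y, ∫ ω, C y ω ∂μ = y)
    (hCvar : ∀ y, ∫ ω, ‖C y ω - y‖ ^ 2 ∂μ ≤ w * ‖y‖ ^ 2)
    (hCint : ∀ y, Integrable (C y) μ)
    (hCint2 : ∀ y, Integrable (fun ω => ‖C y ω‖ ^ 2) μ)
    (g h : EuclideanSpace ℝ (Fin d)) :
    ∫ ω, ‖h + (1 / (1 + w)) • C (g - h) ω - g‖ ^ 2 ∂μ
      ≤ (1 - 1 / (1 + w)) * ‖h - g‖ ^ 2 := by
  set α : ℝ := 1 / (1 + w) with hα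
  have hw1 : (0:ℝ) < 1 + w := by linarith
  set x : EuclideanSpace ℝ (Fin d) := g - h with hx
  -- integrability of inner product with constant
  have hinner : Integrable (fun ω => @inner ℝ _ _ (C x ω - x) x) μ := by
    have h1 : Integrable (fun ω => @inner ℝ _ _ (C x ω) x) μ :=
      (hCint x).inner_const x
    have h2 : (fun ω => @inner ℝ _ _ (C x ω - x) x)
        = fun ω => @inner ℝ _ _ (C x ω) x - @inner ℝ _ _ x x := by
      funext ω; rw [inner_sub_left]
    rw [h2]
    exact h1.sub (integrable_const _)
  -- integrability of ‖C x ω - x‖^2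
  have hsq : Integrable (fun ω => ‖C x ω - x‖ ^ 2) μ := by
    have h2 : (fun ω => ‖C x ω - x‖ ^ 2)
        = fun ω => ‖C x ω‖ ^ 2 - 2 * @inner ℝ _ _ (C x ω) x + ‖x‖ ^ 2 := by
      funext ω
      rw [norm_sub_sq_real]
    rw [h2]
    exact (((hCint2 x).sub (((hCint x).inner_const x).const_mul 2)).add
      (integrable_const _))
  -- the inner product integrates to zero
  have hinner_zero : ∫ ω, @inner ℝ _ _ (C x ω - x) x ∂μ = 0 := by
    have h2 : (fun ω => @inner ℝ _ _ (C x ω - x) x)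
        = fun ω => @inner ℝ _ _ x (C x ω) - @inner ℝ _ _ x x := by
      funext ω; rw [inner_sub_left, real_inner_comm]
    rw [h2, integral_sub ((hCint x).const_inner x) (integrable_const _),
      integral_inner (hCint x), hCmean, integral_const, probReal_univ]
    simp
  -- pointwise expansion
  have hpt : ∀ ω, ‖h + α • C x ω - g‖ ^ 2
      = α ^ 2 * ‖C x ω - x‖ ^ 2
        + (2 * (α * (α - 1))) * @inner ℝ _ _ (C x ω - x) x
        + (α - 1) ^ 2 * ‖x‖ ^ 2 := by
    intro ω
    have hrw : h + α • C x ω - g = α • (C x ω - x) + (α - 1) • x := by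
      rw [hx]; module
    rw [hrw, norm_add_sq_real, real_inner_smul_left, real_inner_smul_right,
      norm_smul, norm_smul, mul_pow, mul_pow]
    simp [Real.norm_eq_abs, sq_abs]
    ring
  calc ∫ ω, ‖h + α • C x ω - g‖ ^ 2 ∂μ
      = α ^ 2 * ∫ ω, ‖C x ω - x‖ ^ 2 ∂μ
        + (2 * (α * (α - 1))) * ∫ ω, @inner ℝ _ _ (C x ω - x) x ∂μ
        + (α - 1) ^ 2 * ‖x‖ ^ 2 := by
        simp only [hpt]
        have hAB : Integrable (fun ω => α ^ 2 * ‖C x ω - x‖ ^ 2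
            + 2 * (α * (α - 1)) * @inner ℝ _ _ (C x ω - x) x) μ :=
          (hsq.const_mul (α ^ 2)).add (hinner.const_mul (2 * (α * (α - 1))))
        rw [integral_add hAB (integrable_const _),
          integral_add (hsq.const_mul (α ^ 2)) (hinner.const_mul (2 * (α * (α - 1)))),
          integral_const, probReal_univ, integral_const_mul, integral_const_mul]
        simp
    _ ≤ α ^ 2 * (w * ‖x‖ ^ 2) + 0 + (α - 1) ^ 2 * ‖x‖ ^ 2 := by
        rw [hinner_zero, mul_zero]
        have := hCvar x
        gcongr
    _ = (α ^ 2 * w + (α - 1) ^ 2) * ‖x‖ ^ 2 := by ring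
    _ = (1 - α) * ‖x‖ ^ 2 := by
        have : α ^ 2 * w + (α - 1) ^ 2 = 1 - α := by
          rw [hα]; field_simp; ring
        rw [this]
    _ = (1 - α) * ‖h - g‖ ^ 2 := by rw [hx, norm_sub_rev]
end

section
/- Under the setup of the unbiased compressed estimator with a single uniformly sampled client: g = C(∇f_S(x) − h_S) + h with h = (1/N)∑ᵢ hᵢ, the variance satisfies E[‖g − ∇f(x)‖²] ≤ (1+ω)·(1/N)∑ᵢ₌₁^N ‖∇fᵢ(x) − hᵢ‖². -/
open MeasureTheory InnerProductSpace

section aux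
variable {d : ℕ} {Ω : Type*} [MeasurableSpace Ω] (μ : Measure Ω) [IsProbabilityMeasure μ]

-- key per-coordinate bound
theorem key_bound (w : ℝ)
    (C : EuclideanSpace ℝ (Fin d) → Ω → EuclideanSpace ℝ (Fin d))
    (hCmean : ∀ y, ∫ ω, C y ω ∂μ = y)
    (hCvar : ∀ y, ∫ ω, ‖C y ω - y‖ ^ 2 ∂μ ≤ w * ‖y‖ ^ 2)
    (hCint : ∀ y, Integrable (C y) μ)
    (hCint2 : ∀ y, Integrable (fun ω => ‖C y ω‖ ^ 2) μ)
    (y k : EuclideanSpace ℝ (Fin d)) :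
    ∫ ω, ‖C y ω + k‖ ^ 2 ∂μ ≤ w * ‖y‖ ^ 2 + ‖y + k‖ ^ 2 := by
  have hinner : ∀ (c : EuclideanSpace ℝ (Fin d)),
      Integrable (fun ω => @inner ℝ _ _ c (C y ω)) μ := by
    intro c
    exact (innerSL ℝ c).integrable_comp (hCint y)
  have hinner_int : ∀ (c : EuclideanSpace ℝ (Fin d)),
      ∫ ω, (@inner ℝ _ _ c (C y ω)) ∂μ = @inner ℝ _ _ c y := by
    intro c
    have h := (innerSL ℝ c).integral_comp_comm (hCint y)
    rw [hCmean y] at h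
    exact h
  have expand : ∀ (c : EuclideanSpace ℝ (Fin d)) ω,
      ‖C y ω + c‖ ^ 2 = ‖C y ω‖ ^ 2 + 2 * (@inner ℝ _ _ c (C y ω)) + ‖c‖ ^ 2 := by
    intro c ω
    rw [@norm_add_sq_real]
    rw [real_inner_comm]
    try ring
  have int_eq : ∀ (c : EuclideanSpace ℝ (Fin d)),
      ∫ ω, ‖C y ω + c‖ ^ 2 ∂μ
        = (∫ ω, ‖C y ω‖ ^ 2 ∂μ) + 2 * (@inner ℝ _ _ c y) + ‖c‖ ^ 2 := by
    intro c
    have : (fun ω => ‖C y ω + c‖ ^ 2)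
        = fun ω => ‖C y ω‖ ^ 2 + 2 * (@inner ℝ _ _ c (C y ω)) + ‖c‖ ^ 2 :=
      funext (expand c)
    rw [this]
    have hI1 : Integrable (fun ω => ‖C y ω‖ ^ 2 + 2 * (@inner ℝ _ _ c (C y ω))) μ :=
      (hCint2 y).add ((hinner c).const_mul 2)
    rw [integral_add hI1 (integrable_const _),
      integral_add (hCint2 y) ((hinner c).const_mul 2), integral_const_mul, hinner_int,
      integral_const]
    simp
  have h1 : ∫ ω, ‖C y ω + k‖ ^ 2 ∂μ
      = (∫ ω, ‖C y ω - y‖ ^ 2 ∂μ) + ‖y + k‖ ^ 2 := by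
    have e2 : ∫ ω, ‖C y ω - y‖ ^ 2 ∂μ = (∫ ω, ‖C y ω‖ ^ 2 ∂μ) - ‖y‖ ^ 2 := by
      have h := int_eq (-y)
      simp only [← sub_eq_add_neg] at h
      rw [h, inner_neg_left, real_inner_self_eq_norm_sq, norm_neg]
      ring
    rw [int_eq k, e2, @norm_add_sq_real, real_inner_comm y k]
    ring
  rw [h1]
  have := hCvar y
  linarith
end aux

theorem compressed_estimator_variance {d N : ℕ} (hN : 0 < N)
    {Ω : Type*} [MeasurableSpace Ω] (μ : Measure Ω) [IsProbabilityMeasure μ]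
    (w : ℝ) (hw : 0 ≤ w)
    (C : EuclideanSpace ℝ (Fin d) → Ω → EuclideanSpace ℝ (Fin d))
    (hCmean : ∀ y, ∫ ω, C y ω ∂μ = y)
    (hCvar : ∀ y, ∫ ω, ‖C y ω - y‖ ^ 2 ∂μ ≤ w * ‖y‖ ^ 2)
    (hCint : ∀ y, Integrable (C y) μ)
    (hCint2 : ∀ y, Integrable (fun ω => ‖C y ω‖ ^ 2) μ)
    (f : Fin N → EuclideanSpace ℝ (Fin d) → ℝ)
    (hdiff : ∀ i, Differentiable ℝ (f i))
    (hvec : Fin N → EuclideanSpace ℝ (Fin d))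
    (x : EuclideanSpace ℝ (Fin d)) :
    (N : ℝ)⁻¹ * ∑ i : Fin N,
        (∫ ω, ‖C (gradient (f i) x - hvec i) ω + (N : ℝ)⁻¹ • ∑ j : Fin N, hvec j
            - gradient (fun y => (N : ℝ)⁻¹ * ∑ k : Fin N, f k y) x‖ ^ 2 ∂μ)
      ≤ (1 + w) * ((N : ℝ)⁻¹ * ∑ i : Fin N, ‖gradient (f i) x - hvec i‖ ^ 2) := by
  set a : Fin N → EuclideanSpace ℝ (Fin d) := fun i => gradient (f i) x - hvec i with ha
  -- gradient of the average
  have hG : gradient (fun y => (N : ℝ)⁻¹ * ∑ k : Fin N, f k y) x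
      = (N : ℝ)⁻¹ • ∑ k : Fin N, gradient (f k) x := by
    have hF : HasFDerivAt (fun y => (N : ℝ)⁻¹ * ∑ k : Fin N, f k y)
        (toDual ℝ _ ((N : ℝ)⁻¹ • ∑ k : Fin N, gradient (f k) x)) x := by
      have hsum : HasFDerivAt (fun y => ∑ k : Fin N, f k y)
          (∑ k : Fin N, toDual ℝ _ (gradient (f k) x)) x := by
        apply HasFDerivAt.fun_sum
        intro k _
        exact ((hdiff k x).hasGradientAt).hasFDerivAt
      have := hsum.const_mul ((N : ℝ)⁻¹)
      refine this.congr_fderiv ?_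
      simp [Finset.smul_sum]
    have := (hF.hasGradientAt).gradient
    simpa only [LinearIsometryEquiv.symm_apply_apply] using this
  -- so the constant shift equals -(avg of a)
  have hshift : ∀ i : Fin N, ∀ ω,
      C (a i) ω + (N : ℝ)⁻¹ • ∑ j : Fin N, hvec j
        - gradient (fun y => (N : ℝ)⁻¹ * ∑ k : Fin N, f k y) x
      = C (a i) ω + (-((N : ℝ)⁻¹ • ∑ j : Fin N, a j)) := by
    intro i ω
    rw [hG, ha]
    simp [Finset.sum_sub_distrib, smul_sub]
    abel
  set abar : EuclideanSpace ℝ (Fin d) := (N : ℝ)⁻¹ • ∑ j : Fin N, a j with habar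
  have key : ∀ i : Fin N,
      (∫ ω, ‖C (a i) ω + (N : ℝ)⁻¹ • ∑ j : Fin N, hvec j
          - gradient (fun y => (N : ℝ)⁻¹ * ∑ k : Fin N, f k y) x‖ ^ 2 ∂μ)
      ≤ w * ‖a i‖ ^ 2 + ‖a i - abar‖ ^ 2 := by
    intro i
    have : (∫ ω, ‖C (a i) ω + (N : ℝ)⁻¹ • ∑ j : Fin N, hvec j
          - gradient (fun y => (N : ℝ)⁻¹ * ∑ k : Fin N, f k y) x‖ ^ 2 ∂μ)
        = ∫ ω, ‖C (a i) ω + (-abar)‖ ^ 2 ∂μ := by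
      congr 1
      funext ω
      rw [hshift i ω]
    rw [this]
    have := key_bound μ w C hCmean hCvar hCint hCint2 (a i) (-abar)
    simpa [sub_eq_add_neg] using this
  have hNpos : (0:ℝ) < (N:ℝ) := by exact_mod_cast hN
  have hNinv : (0:ℝ) ≤ (N:ℝ)⁻¹ := by positivity
  calc (N : ℝ)⁻¹ * ∑ i : Fin N,
        (∫ ω, ‖C (gradient (f i) x - hvec i) ω + (N : ℝ)⁻¹ • ∑ j : Fin N, hvec j
            - gradient (fun y => (N : ℝ)⁻¹ * ∑ k : Fin N, f k y) x‖ ^ 2 ∂μ)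
      ≤ (N : ℝ)⁻¹ * ∑ i : Fin N, (w * ‖a i‖ ^ 2 + ‖a i - abar‖ ^ 2) := by
        apply mul_le_mul_of_nonneg_left _ hNinv
        exact Finset.sum_le_sum fun i _ => key i
    _ ≤ (1 + w) * ((N : ℝ)⁻¹ * ∑ i : Fin N, ‖a i‖ ^ 2) := by
        -- variance decomposition: avg ‖a i - abar‖² = avg ‖a i‖² - ‖abar‖²
        have hvar : (N : ℝ)⁻¹ * ∑ i : Fin N, ‖a i - abar‖ ^ 2
            = (N : ℝ)⁻¹ * ∑ i : Fin N, ‖a i‖ ^ 2 - ‖abar‖ ^ 2 := by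
          have expand : ∀ i : Fin N, ‖a i - abar‖ ^ 2
              = ‖a i‖ ^ 2 - 2 * (@inner ℝ _ _ abar (a i)) + ‖abar‖ ^ 2 := by
            intro i
            rw [@norm_sub_sq_real, real_inner_comm]
            try ring
          have hsuminner : ∑ i : Fin N, (@inner ℝ _ _ abar (a i))
              = (N:ℝ) * ‖abar‖ ^ 2 := by
            rw [← inner_sum]
            have : (∑ i : Fin N, a i) = (N:ℝ) • abar := by
              rw [habar, smul_smul]
              rw [mul_inv_cancel₀ (ne_of_gt hNpos), one_smul]
            rw [this, inner_smul_right, real_inner_self_eq_norm_sq]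
          simp only [expand]
          rw [Finset.sum_add_distrib, Finset.sum_sub_distrib, ← Finset.mul_sum, hsuminner]
          simp only [Finset.sum_const, Finset.card_univ, Fintype.card_fin, nsmul_eq_mul]
          have hNpos : (0:ℝ) < (N:ℝ) := by exact_mod_cast hN
          have hc : (N:ℝ)⁻¹ * (N:ℝ) = 1 := inv_mul_cancel₀ (ne_of_gt hNpos)
          linear_combination (-‖abar‖ ^ 2) * hc
        have hsplit : (N : ℝ)⁻¹ * ∑ i : Fin N, (w * ‖a i‖ ^ 2 + ‖a i - abar‖ ^ 2)
            = w * ((N : ℝ)⁻¹ * ∑ i : Fin N, ‖a i‖ ^ 2)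
              + ((N : ℝ)⁻¹ * ∑ i : Fin N, ‖a i - abar‖ ^ 2) := by
          rw [Finset.sum_add_distrib, ← Finset.mul_sum]
          ring
        rw [hsplit, hvar]
        have : (0:ℝ) ≤ ‖abar‖ ^ 2 := by positivity
        nlinarith [this]
end

section
/- If S clients are sampled uniformly with replacement from {1,…,N} as i₁,…,i_S, each with an independent ω-compression operator Cⱼ, then g = (1/S)∑ⱼ Cⱼ(∇f_{iⱼ}(x) − h_{iⱼ}) + h satisfies E[‖g − ∇f(x)‖²] ≤ ((1+ω)/S)·(1/N)∑ᵢ₌₁^N ‖∇fᵢ(x) − hᵢ‖². -/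
open MeasureTheory RealInnerProductSpace



section helpers

variable {α β : Type*} [MeasurableSpace α] [MeasurableSpace β]
  (μ : Measure α) (ν : Measure β)

lemma mp_fst [IsProbabilityMeasure ν] [SigmaFinite μ] :
    MeasurePreserving Prod.fst (μ.prod ν) μ :=
  ⟨measurable_fst, by simp⟩

lemma mp_snd [IsProbabilityMeasure μ] [SigmaFinite ν] :
    MeasurePreserving Prod.snd (μ.prod ν) ν :=
  ⟨measurable_snd, by simp⟩

variable {G : Type*} [NormedAddCommGroup G]

lemma int_fst [IsProbabilityMeasure ν] [SigmaFinite μ] {g : α → G}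
    (hg : Integrable g μ) : Integrable (fun p : α × β => g p.1) (μ.prod ν) :=
  ((mp_fst μ ν).integrable_comp hg.aestronglyMeasurable).mpr hg

lemma int_snd [IsProbabilityMeasure μ] [SigmaFinite ν] {g : β → G}
    (hg : Integrable g ν) : Integrable (fun p : α × β => g p.2) (μ.prod ν) :=
  ((mp_snd μ ν).integrable_comp hg.aestronglyMeasurable).mpr hg

variable [NormedSpace ℝ G]

lemma integral_fst' [IsProbabilityMeasure ν] [SigmaFinite μ] {g : α → G}
    (hg : AEStronglyMeasurable g μ) :
    ∫ p, g p.1 ∂(μ.prod ν) = ∫ x, g x ∂μ := by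
  have h := mp_fst μ ν
  calc ∫ p, g p.1 ∂(μ.prod ν)
      = ∫ x, g x ∂(Measure.map Prod.fst (μ.prod ν)) :=
        (integral_map h.measurable.aemeasurable (by rwa [h.map_eq])).symm
    _ = ∫ x, g x ∂μ := by rw [h.map_eq]

lemma integral_snd' [IsProbabilityMeasure μ] [SigmaFinite ν] {g : β → G}
    (hg : AEStronglyMeasurable g ν) :
    ∫ p, g p.2 ∂(μ.prod ν) = ∫ x, g x ∂ν := by
  have h := mp_snd μ ν
  calc ∫ p, g p.2 ∂(μ.prod ν)
      = ∫ x, g x ∂(Measure.map Prod.snd (μ.prod ν)) :=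
        (integral_map h.measurable.aemeasurable (by rwa [h.map_eq])).symm
    _ = ∫ x, g x ∂ν := by rw [h.map_eq]

end helpers

lemma proj_int {α : Type*} [MeasurableSpace α] {μ : Measure α} {d : ℕ}
    {g : α → EuclideanSpace ℝ (Fin d)} (hg : Integrable g μ) (t : Fin d) :
    Integrable (fun ω => g ω t) μ :=
  (EuclideanSpace.proj (𝕜 := ℝ) t).integrable_comp hg

lemma proj_integral {α : Type*} [MeasurableSpace α] {μ : Measure α} {d : ℕ}
    {g : α → EuclideanSpace ℝ (Fin d)} (hg : Integrable g μ) (t : Fin d) :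
    ∫ ω, g ω t ∂μ = (∫ ω, g ω ∂μ) t :=
  (EuclideanSpace.proj (𝕜 := ℝ) t).integral_comp_comm hg

lemma aux_var {d : ℕ} : ∀ (S : ℕ) (Ω : Fin S → Type*) [inst : ∀ j, MeasurableSpace (Ω j)]
    (μ : ∀ j, Measure (Ω j)) [hprob : ∀ j, IsProbabilityMeasure (μ j)]
    (W : ∀ j, Ω j → EuclideanSpace ℝ (Fin d))
    (_ : ∀ j, Integrable (W j) (μ j)) (_ : ∀ j, Integrable (fun ω => ‖W j ω‖ ^ 2) (μ j)),
    Integrable (fun ω : ∀ j, Ω j => ∑ j, W j (ω j)) (Measure.pi μ) ∧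
    (∫ ω, ∑ j, W j (ω j) ∂Measure.pi μ) = ∑ j, ∫ ω, W j ω ∂(μ j) ∧
    Integrable (fun ω : ∀ j, Ω j => ‖∑ j, W j (ω j)‖ ^ 2) (Measure.pi μ) ∧
    (∫ ω, ‖∑ j, W j (ω j)‖ ^ 2 ∂Measure.pi μ)
      = ∑ j, (∫ ω, ‖W j ω‖ ^ 2 ∂(μ j)) - ∑ j, ‖∫ ω, W j ω ∂(μ j)‖ ^ 2
        + ‖∑ j, ∫ ω, W j ω ∂(μ j)‖ ^ 2 := by
  intro S
  induction S with
  | zero =>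
    intro Ω inst μ hprob W h1 h2
    refine ⟨by simp [integrable_const (0 : EuclideanSpace ℝ (Fin d))], by simp, ?_, by simp⟩
    · simpa using (integrable_const (0:ℝ) (μ := Measure.pi μ))
  | succ n ih =>
    intro Ω inst μ hprob W h1 h2
    obtain ⟨ih1, ih2, ih3, ih4⟩ := ih (fun j => Ω j.succ) (fun j => μ j.succ)
      (fun j => W j.succ) (fun j => h1 j.succ) (fun j => h2 j.succ)
    set ν : Measure (∀ j : Fin n, Ω j.succ) := Measure.pi (fun j : Fin n => μ j.succ) with hνdef
    have hmp : MeasurePreserving (⇑(MeasurableEquiv.piFinSuccAbove Ω 0).symm)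
        ((μ 0).prod ν) (Measure.pi μ) := (measurePreserving_piFinSuccAbove μ 0).symm
    have hemb := (MeasurableEquiv.piFinSuccAbove Ω 0).symm.measurableEmbedding
    have h0 : ∀ p : Ω 0 × (∀ j : Fin n, Ω j.succ),
        (MeasurableEquiv.piFinSuccAbove Ω 0).symm p 0 = p.1 := by
      intro p
      show (Fin.insertNthEquiv Ω 0) p 0 = p.1
      simp
      rfl
    have hsucc : ∀ (p : Ω 0 × (∀ j : Fin n, Ω j.succ)) (j : Fin n),
        (MeasurableEquiv.piFinSuccAbove Ω 0).symm p j.succ = p.2 j := by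
      intro p j
      show (Fin.insertNthEquiv Ω 0) p ((0 : Fin (n+1)).succAbove j) = p.2 j
      simp
      rfl
    have hsum : ∀ p : Ω 0 × (∀ j : Fin n, Ω j.succ),
        (∑ l, W l ((MeasurableEquiv.piFinSuccAbove Ω 0).symm p l))
          = W 0 p.1 + ∑ j, W j.succ (p.2 j) := by
      intro p
      rw [Fin.sum_univ_succAbove _ 0, h0 p]
      exact congrArg _ (Finset.sum_congr rfl fun j _ => congrArg (W j.succ) (hsucc p j))
    -- basic integrabilities over the product
    have hA : Integrable (fun p : Ω 0 × (∀ j : Fin n, Ω j.succ) => W 0 p.1) ((μ 0).prod ν) :=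
      int_fst _ _ (h1 0)
    have hB : Integrable (fun p : Ω 0 × (∀ j : Fin n, Ω j.succ) =>
        ∑ j, W j.succ (p.2 j)) ((μ 0).prod ν) := int_snd _ _ ih1
    have hA2 : Integrable (fun p : Ω 0 × (∀ j : Fin n, Ω j.succ) => ‖W 0 p.1‖ ^ 2)
        ((μ 0).prod ν) := int_fst _ _ (h2 0)
    have hB2 : Integrable (fun p : Ω 0 × (∀ j : Fin n, Ω j.succ) =>
        ‖∑ j, W j.succ (p.2 j)‖ ^ 2) ((μ 0).prod ν) := int_snd _ _ ih3
    have hcross_eq : (fun p : Ω 0 × (∀ j : Fin n, Ω j.succ) =>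
        ⟪W 0 p.1, ∑ j, W j.succ (p.2 j)⟫)
          = fun p => ∑ t, W 0 p.1 t * (∑ j, W j.succ (p.2 j)) t := by
      funext p; simp [PiLp.inner_apply]
      exact Finset.sum_congr rfl fun _ _ => mul_comm _ _
    have hcrossInt : Integrable (fun p : Ω 0 × (∀ j : Fin n, Ω j.succ) =>
        ⟪W 0 p.1, ∑ j, W j.succ (p.2 j)⟫) ((μ 0).prod ν) := by
      rw [hcross_eq]
      exact integrable_finset_sum _ fun t _ => (proj_int (h1 0) t).mul_prod (proj_int ih1 t)
    have hcrossVal : ∫ p, ⟪W 0 p.1, ∑ j, W j.succ (p.2 j)⟫ ∂((μ 0).prod ν)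
        = ⟪∫ ω, W 0 ω ∂μ 0, ∑ j : Fin n, ∫ ω, W j.succ ω ∂μ j.succ⟫ := by
      rw [hcross_eq, integral_finset_sum _
        (fun t _ => (proj_int (h1 0) t).mul_prod (proj_int ih1 t))]
      have h1t : ∀ t : Fin d,
          (∫ p : Ω 0 × (∀ j : Fin n, Ω j.succ),
              W 0 p.1 t * (∑ j, W j.succ (p.2 j)) t ∂((μ 0).prod ν))
            = (∫ ω, W 0 ω ∂μ 0) t * (∑ j : Fin n, ∫ ω, W j.succ ω ∂μ j.succ) t := by
        intro t
        have hpm := integral_prod_mul (μ := μ 0) (ν := ν) (fun ω => W 0 ω t)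
          (fun σ : ∀ j : Fin n, Ω j.succ => (∑ j, W j.succ (σ j)) t)
        calc ∫ p : Ω 0 × (∀ j : Fin n, Ω j.succ),
              W 0 p.1 t * (∑ j, W j.succ (p.2 j)) t ∂((μ 0).prod ν)
            = (∫ ω, W 0 ω t ∂μ 0) * ∫ σ : ∀ j : Fin n, Ω j.succ,
                (∑ j, W j.succ (σ j)) t ∂ν := hpm
          _ = _ := by rw [proj_integral (h1 0) t, proj_integral ih1 t, ih2]
      simp_rw [h1t]
      simp [PiLp.inner_apply]
      exact Finset.sum_congr rfl fun _ _ => mul_comm _ _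
    refine ⟨?_, ?_, ?_, ?_⟩
    · rw [← hmp.integrable_comp_emb hemb]
      exact (hA.add hB).congr (Filter.Eventually.of_forall fun p => (hsum p).symm)
    · calc ∫ ω, ∑ l, W l (ω l) ∂Measure.pi μ
          = ∫ x, (fun ω : ∀ j, Ω j => ∑ l, W l (ω l))
              ((MeasurableEquiv.piFinSuccAbove Ω 0).symm x) ∂((μ 0).prod ν) :=
            (hmp.integral_comp hemb _).symm
        _ = ∫ p : Ω 0 × (∀ j : Fin n, Ω j.succ),
              (W 0 p.1 + ∑ j, W j.succ (p.2 j)) ∂((μ 0).prod ν) :=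
            integral_congr_ae (Filter.Eventually.of_forall fun p => hsum p)
        _ = ∑ j, ∫ ω, W j ω ∂μ j := by
            rw [integral_add hA hB, integral_fst' _ _ (h1 0).aestronglyMeasurable,
              integral_snd' _ _ ih1.aestronglyMeasurable, ih2, Fin.sum_univ_succ]
    · rw [← hmp.integrable_comp_emb hemb]
      refine (((hA2.add (hcrossInt.const_mul 2)).add hB2).congr
        (Filter.Eventually.of_forall fun p => ?_))
      show _ = ‖∑ l, W l ((MeasurableEquiv.piFinSuccAbove Ω 0).symm p l)‖ ^ 2
      simp only [Pi.add_apply]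
      rw [hsum p, norm_add_sq_real]
    · calc ∫ ω, ‖∑ l, W l (ω l)‖ ^ 2 ∂Measure.pi μ
          = ∫ x, (fun ω : ∀ j, Ω j => ‖∑ l, W l (ω l)‖ ^ 2)
              ((MeasurableEquiv.piFinSuccAbove Ω 0).symm x) ∂((μ 0).prod ν) :=
            (hmp.integral_comp hemb _).symm
        _ = ∫ p : Ω 0 × (∀ j : Fin n, Ω j.succ),
              (‖W 0 p.1‖ ^ 2 + 2 * ⟪W 0 p.1, ∑ j, W j.succ (p.2 j)⟫
                + ‖∑ j, W j.succ (p.2 j)‖ ^ 2) ∂((μ 0).prod ν) :=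
            integral_congr_ae (Filter.Eventually.of_forall fun p => by
              show ‖∑ l, W l ((MeasurableEquiv.piFinSuccAbove Ω 0).symm p l)‖ ^ 2 = _
              rw [hsum p, norm_add_sq_real])
        _ = ∑ j, ∫ ω, ‖W j ω‖ ^ 2 ∂μ j - ∑ j, ‖∫ ω, W j ω ∂μ j‖ ^ 2
              + ‖∑ j, ∫ ω, W j ω ∂μ j‖ ^ 2 := by
            have h2c : Integrable (fun p : Ω 0 × (∀ j : Fin n, Ω j.succ) =>
                2 * ⟪W 0 p.1, ∑ j, W j.succ (p.2 j)⟫) ((μ 0).prod ν) :=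
              hcrossInt.const_mul 2
            have hfg : Integrable (fun p : Ω 0 × (∀ j : Fin n, Ω j.succ) =>
                ‖W 0 p.1‖ ^ 2 + 2 * ⟪W 0 p.1, ∑ j, W j.succ (p.2 j)⟫) ((μ 0).prod ν) :=
              hA2.add h2c
            rw [integral_add hfg hB2,
              integral_add hA2 h2c, integral_const_mul, hcrossVal,
              integral_fst' _ _ (h2 0).aestronglyMeasurable,
              integral_snd' _ _ ih3.aestronglyMeasurable, ih4]
            simp_rw [Fin.sum_univ_succ]
            rw [norm_add_sq_real]
            ring



lemma sum_eval_single {N S : ℕ} (g : Fin N → ℝ) (j : Fin S) :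
    ∑ idx : Fin S → Fin N, g (idx j) = (∑ i, g i) * (N : ℝ) ^ (S - 1) := by
  have h := Finset.prod_univ_sum (fun _ : Fin S => (Finset.univ : Finset (Fin N)))
    (fun l i => if l = j then g i else 1)
  rw [Fintype.piFinset_univ] at h
  have hR : ∀ p : Fin S → Fin N,
      (∏ l, if l = j then g (p l) else 1) = g (p j) :=
    fun p => Fintype.prod_ite_eq' j (fun l => g (p l))
  have hL : (∏ l : Fin S, ∑ i : Fin N, if l = j then g i else 1)
      = (∑ i, g i) * (N : ℝ) ^ (S - 1) := by
    rw [← Finset.mul_prod_erase Finset.univ _ (Finset.mem_univ j)]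
    have h1 : (∑ i : Fin N, if j = j then g i else 1) = ∑ i, g i := by simp
    have h2 : ∀ l ∈ Finset.univ.erase j,
        (∑ i : Fin N, if l = j then g i else 1) = (N : ℝ) := by
      intro l hl
      rw [Finset.mem_erase] at hl
      simp [hl.1]
    rw [h1, Finset.prod_congr rfl h2, Finset.prod_const,
      Finset.card_erase_of_mem (Finset.mem_univ j), Finset.card_univ, Fintype.card_fin]
  calc ∑ idx : Fin S → Fin N, g (idx j)
      = ∑ idx : Fin S → Fin N, ∏ l, (if l = j then g (idx l) else 1) :=
        Finset.sum_congr rfl fun p _ => (hR p).symm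
    _ = ∏ l : Fin S, ∑ i : Fin N, (if l = j then g i else 1) := h.symm
    _ = (∑ i, g i) * (N : ℝ) ^ (S - 1) := hL

lemma sum_eval_pair {N S d : ℕ} {m : Fin N → EuclideanSpace ℝ (Fin d)}
    (hm : ∑ i, m i = 0) {j k : Fin S} (hjk : j ≠ k) :
    ∑ idx : Fin S → Fin N, ⟪m (idx j), m (idx k)⟫ = 0 := by
  have hinner : ∀ idx : Fin S → Fin N,
      ⟪m (idx j), m (idx k)⟫ = ∑ t, m (idx j) t * m (idx k) t := fun idx => by
    simp [PiLp.inner_apply]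
    exact Finset.sum_congr rfl fun _ _ => mul_comm _ _
  simp_rw [hinner]
  rw [Finset.sum_comm]
  refine Finset.sum_eq_zero fun t _ => ?_
  have h := Finset.prod_univ_sum (fun _ : Fin S => (Finset.univ : Finset (Fin N)))
    (fun l i => if l = j then m i t else if l = k then m i t else 1)
  rw [Fintype.piFinset_univ] at h
  have hR : ∀ p : Fin S → Fin N,
      (∏ l, if l = j then m (p l) t else if l = k then m (p l) t else 1)
        = m (p j) t * m (p k) t := by
    intro p
    rw [← Finset.mul_prod_erase Finset.univ _ (Finset.mem_univ j), if_pos rfl]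
    congr 1
    rw [← Finset.mul_prod_erase _ _
      (Finset.mem_erase.mpr ⟨Ne.symm hjk, Finset.mem_univ k⟩)]
    rw [if_neg (Ne.symm hjk), if_pos rfl]
    have hone : ∀ l ∈ (Finset.univ.erase j).erase k,
        (if l = j then m (p l) t else if l = k then m (p l) t else 1) = 1 := by
      intro l hl
      rw [Finset.mem_erase] at hl
      obtain ⟨hlk, hl2⟩ := hl
      rw [Finset.mem_erase] at hl2
      rw [if_neg hl2.1, if_neg hlk]
    rw [Finset.prod_congr rfl hone, Finset.prod_const_one, mul_one]
  have hsum0 : (∑ i : Fin N, m i t) = 0 := by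
    have h1 : (∑ i, m i) t = ∑ i, m i t := by simp
    rw [← h1, hm]
    rfl
  have hL0 : (∑ i : Fin N, if j = j then m i t else if j = k then m i t else 1) = 0 := by
    simpa using hsum0
  calc ∑ idx : Fin S → Fin N, m (idx j) t * m (idx k) t
      = ∑ idx : Fin S → Fin N, ∏ l,
          (if l = j then m (idx l) t else if l = k then m (idx l) t else 1) :=
        Finset.sum_congr rfl fun p _ => (hR p).symm
    _ = ∏ l : Fin S, ∑ i : Fin N,
          (if l = j then m i t else if l = k then m i t else 1) := h.symm
    _ = 0 := Finset.prod_eq_zero (Finset.mem_univ j) hL0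



set_option maxHeartbeats 1000000 in
theorem minibatch_compressed_estimator_variance {d N S : ℕ} (hN : 0 < N) (hS : 0 < S)
    {Ω : Fin S → Type*} [∀ j, MeasurableSpace (Ω j)]
    (μ : ∀ j, Measure (Ω j)) [∀ j, IsProbabilityMeasure (μ j)]
    (w : ℝ) (hw : 0 ≤ w)
    (C : ∀ j : Fin S, EuclideanSpace ℝ (Fin d) → Ω j → EuclideanSpace ℝ (Fin d))
    (hCmean : ∀ j y, ∫ ω, C j y ω ∂(μ j) = y)
    (hCvar : ∀ j y, ∫ ω, ‖C j y ω - y‖ ^ 2 ∂(μ j) ≤ w * ‖y‖ ^ 2)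
    (hCint : ∀ j y, Integrable (C j y) (μ j))
    (hCint2 : ∀ j y, Integrable (fun ω => ‖C j y ω‖ ^ 2) (μ j))
    (f : Fin N → EuclideanSpace ℝ (Fin d) → ℝ)
    (hdiff : ∀ i, Differentiable ℝ (f i))
    (hvec : Fin N → EuclideanSpace ℝ (Fin d))
    (x : EuclideanSpace ℝ (Fin d)) :
    ((N : ℝ) ^ S)⁻¹ * ∑ idx : Fin S → Fin N,
        (∫ ω : (∀ j, Ω j),
          ‖(S : ℝ)⁻¹ • ∑ j : Fin S, C j (gradient (f (idx j)) x - hvec (idx j)) (ω j)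
              + (N : ℝ)⁻¹ • ∑ i : Fin N, hvec i
              - gradient (fun y => (N : ℝ)⁻¹ * ∑ k : Fin N, f k y) x‖ ^ 2
          ∂(Measure.pi μ))
      ≤ ((1 + w) / S) * ((N : ℝ)⁻¹ * ∑ i : Fin N, ‖gradient (f i) x - hvec i‖ ^ 2) := by
  classical
  have hNr : (N : ℝ) ≠ 0 := Nat.cast_ne_zero.mpr hN.ne'
  have hSr : (S : ℝ) ≠ 0 := Nat.cast_ne_zero.mpr hS.ne'
  set a : Fin N → EuclideanSpace ℝ (Fin d) := fun i => gradient (f i) x - hvec i with ha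
  set abar : EuclideanSpace ℝ (Fin d) := (N : ℝ)⁻¹ • ∑ i, a i with habar
  set m : Fin N → EuclideanSpace ℝ (Fin d) := fun i => a i - abar with hm
  -- gradient of the average
  have hgradavg : gradient (fun y => (N : ℝ)⁻¹ * ∑ k : Fin N, f k y) x
      = (N : ℝ)⁻¹ • ∑ k, gradient (f k) x := by
    have hs : HasFDerivAt (fun y => ∑ k : Fin N, f k y)
        (∑ k, (InnerProductSpace.toDual ℝ (EuclideanSpace ℝ (Fin d))) (gradient (f k) x)) x :=
      HasFDerivAt.fun_sum fun k _ => ((hdiff k x).hasGradientAt).hasFDerivAt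
    have hfd : HasFDerivAt (fun y => (N : ℝ)⁻¹ * ∑ k : Fin N, f k y)
        ((N : ℝ)⁻¹ • ∑ k, (InnerProductSpace.toDual ℝ (EuclideanSpace ℝ (Fin d)))
          (gradient (f k) x)) x := hs.const_mul ((N : ℝ)⁻¹)
    refine HasGradientAt.gradient ?_
    rw [hasGradientAt_iff_hasFDerivAt]
    rw [show (InnerProductSpace.toDual ℝ (EuclideanSpace ℝ (Fin d)))
        ((N : ℝ)⁻¹ • ∑ k, gradient (f k) x)
        = (N : ℝ)⁻¹ • ∑ k, (InnerProductSpace.toDual ℝ (EuclideanSpace ℝ (Fin d)))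
            (gradient (f k) x) from by simp [_root_.map_smul, map_sum]]
    exact hfd
  have hbar : abar + (N : ℝ)⁻¹ • ∑ i, hvec i = (N : ℝ)⁻¹ • ∑ i, gradient (f i) x := by
    have hsub : ∑ i, a i = (∑ i, gradient (f i) x) - ∑ i, hvec i := Finset.sum_sub_distrib _ _
    rw [habar, hsub, smul_sub, sub_add_cancel]
  -- pointwise rewriting of the integrand
  have hptw : ∀ (idx : Fin S → Fin N) (ω : ∀ j, Ω j),
      ‖(S : ℝ)⁻¹ • ∑ j : Fin S, C j (gradient (f (idx j)) x - hvec (idx j)) (ω j)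
          + (N : ℝ)⁻¹ • ∑ i : Fin N, hvec i
          - gradient (fun y => (N : ℝ)⁻¹ * ∑ k : Fin N, f k y) x‖ ^ 2
        = ((S : ℝ)⁻¹) ^ 2 * ‖∑ j : Fin S, (C j (a (idx j)) (ω j) - abar)‖ ^ 2 := by
    intro idx ω
    have hv : (S : ℝ)⁻¹ • ∑ j : Fin S, C j (a (idx j)) (ω j)
        + (N : ℝ)⁻¹ • ∑ i : Fin N, hvec i
        - gradient (fun y => (N : ℝ)⁻¹ * ∑ k : Fin N, f k y) x
        = (S : ℝ)⁻¹ • ∑ j : Fin S, (C j (a (idx j)) (ω j) - abar) := by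
      rw [hgradavg, ← hbar, Finset.sum_sub_distrib, smul_sub, Finset.sum_const,
        Finset.card_univ, Fintype.card_fin]
      rw [show (S : ℝ)⁻¹ • (S • abar) = abar from by
        rw [← Nat.cast_smul_eq_nsmul ℝ S abar, smul_smul, inv_mul_cancel₀ hSr, one_smul]]
      abel
    calc ‖(S : ℝ)⁻¹ • ∑ j : Fin S, C j (gradient (f (idx j)) x - hvec (idx j)) (ω j)
          + (N : ℝ)⁻¹ • ∑ i : Fin N, hvec i
          - gradient (fun y => (N : ℝ)⁻¹ * ∑ k : Fin N, f k y) x‖ ^ 2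
        = ‖(S : ℝ)⁻¹ • ∑ j : Fin S, (C j (a (idx j)) (ω j) - abar)‖ ^ 2 :=
          congrArg (fun v : EuclideanSpace ℝ (Fin d) => ‖v‖ ^ 2) hv
      _ = ((S : ℝ)⁻¹) ^ 2 * ‖∑ j : Fin S, (C j (a (idx j)) (ω j) - abar)‖ ^ 2 := by
          rw [norm_smul, Real.norm_eq_abs,
            abs_of_nonneg (inv_nonneg.mpr (Nat.cast_nonneg S)), mul_pow]
  -- integrability of the centered compressed vectors
  have hW1 : ∀ (idx : Fin S → Fin N) (j : Fin S),
      Integrable (fun ω => C j (a (idx j)) ω - abar) (μ j) :=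
    fun idx j => (hCint j (a (idx j))).sub (integrable_const abar)
  have hW2 : ∀ (idx : Fin S → Fin N) (j : Fin S),
      Integrable (fun ω => ‖C j (a (idx j)) ω - abar‖ ^ 2) (μ j) := by
    intro idx j
    have heq : (fun ω => ‖C j (a (idx j)) ω - abar‖ ^ 2)
        = fun ω => ‖C j (a (idx j)) ω‖ ^ 2 - 2 * ⟪C j (a (idx j)) ω, abar⟫ + ‖abar‖ ^ 2 :=
      funext fun ω => norm_sub_sq_real _ _
    rw [heq]
    have h2c : Integrable (fun ω => ‖C j (a (idx j)) ω‖ ^ 2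
        - 2 * ⟪C j (a (idx j)) ω, abar⟫) (μ j) :=
      (hCint2 j _).sub (((hCint j _).inner_const abar).const_mul 2)
    exact h2c.add (integrable_const _)
  have hWint : ∀ (idx : Fin S → Fin N) (j : Fin S),
      ∫ ω, (C j (a (idx j)) ω - abar) ∂μ j = m (idx j) := by
    intro idx j
    rw [integral_sub (hCint j (a (idx j))) (integrable_const abar), hCmean, integral_const]
    simp [hm]
  -- per-index exact value
  set Q : Fin S → Fin N → ℝ := fun j i => ∫ ω, ‖C j (a i) ω - abar‖ ^ 2 ∂μ j with hQ
  have hI : ∀ idx : Fin S → Fin N,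
      (∫ ω : ∀ j, Ω j, ‖∑ j, (C j (a (idx j)) (ω j) - abar)‖ ^ 2 ∂Measure.pi μ)
        = ∑ j, Q j (idx j) - ∑ j, ‖m (idx j)‖ ^ 2 + ‖∑ j, m (idx j)‖ ^ 2 := by
    intro idx
    obtain ⟨-, -, -, h4⟩ := aux_var S Ω μ (fun j ω => C j (a (idx j)) ω - abar)
      (hW1 idx) (hW2 idx)
    rw [h4]
    simp_rw [hWint idx]
    rfl
  -- variance bound for each term
  have hq : ∀ (j : Fin S) (i : Fin N), Q j i ≤ w * ‖a i‖ ^ 2 + ‖m i‖ ^ 2 := by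
    intro j i
    have heq : (fun ω => ‖C j (a i) ω - abar‖ ^ 2)
        = fun ω => ‖C j (a i) ω - a i‖ ^ 2 + 2 * ⟪C j (a i) ω - a i, m i⟫ + ‖m i‖ ^ 2 := by
      funext ω
      have h := norm_add_sq_real (C j (a i) ω - a i) (m i)
      rw [show C j (a i) ω - a i + m i = C j (a i) ω - abar from by
        rw [hm]; exact sub_add_sub_cancel _ _ _] at h
      exact h
    have i1 : Integrable (fun ω => ‖C j (a i) ω - a i‖ ^ 2) (μ j) := by
      have hexp : (fun ω => ‖C j (a i) ω - a i‖ ^ 2)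
          = fun ω => ‖C j (a i) ω‖ ^ 2 - 2 * ⟪C j (a i) ω, a i⟫ + ‖a i‖ ^ 2 :=
        funext fun ω => norm_sub_sq_real _ _
      rw [hexp]
      have h2c : Integrable (fun ω => ‖C j (a i) ω‖ ^ 2
          - 2 * ⟪C j (a i) ω, a i⟫) (μ j) :=
        (hCint2 j _).sub (((hCint j _).inner_const _).const_mul 2)
      exact h2c.add (integrable_const _)
    have i2 : Integrable (fun ω => 2 * ⟪C j (a i) ω - a i, m i⟫) (μ j) :=
      (((hCint j _).sub (integrable_const _)).inner_const _).const_mul 2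
    have i12 : Integrable (fun ω => ‖C j (a i) ω - a i‖ ^ 2
        + 2 * ⟪C j (a i) ω - a i, m i⟫) (μ j) := i1.add i2
    have hzero : (∫ ω, ⟪C j (a i) ω - a i, m i⟫ ∂μ j) = 0 := by
      have hflip : (fun ω => ⟪C j (a i) ω - a i, m i⟫)
          = fun ω => ⟪m i, C j (a i) ω - a i⟫ := funext fun ω => real_inner_comm _ _
      have isub : Integrable (fun ω => C j (a i) ω - a i) (μ j) :=
        (hCint j _).sub (integrable_const _)
      rw [hflip]
      rw [integral_inner isub (m i)]
      rw [integral_sub (hCint j _) (integrable_const _), hCmean, integral_const]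
      simp
    have hval : Q j i = (∫ ω, ‖C j (a i) ω - a i‖ ^ 2 ∂μ j) + ‖m i‖ ^ 2 := by
      rw [hQ]
      show (∫ ω, ‖C j (a i) ω - abar‖ ^ 2 ∂μ j) = _
      rw [heq, integral_add i12 (integrable_const _), integral_add i1 i2,
        integral_const_mul, hzero, integral_const]
      simp
    rw [hval]
    linarith [hCvar j (a i)]
  -- sum of squared deviations is at most sum of squares
  have hsum_a : ∑ i, a i = (N : ℝ) • abar := by
    rw [habar, smul_smul, mul_inv_cancel₀ hNr, one_smul]
  have hm0 : ∑ i, m i = 0 := by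
    rw [hm]
    rw [Finset.sum_sub_distrib, Finset.sum_const, Finset.card_univ, Fintype.card_fin,
      ← Nat.cast_smul_eq_nsmul ℝ N abar, ← hsum_a, sub_self]
  have hmsum : ∑ i, ‖m i‖ ^ 2 ≤ ∑ i, ‖a i‖ ^ 2 := by
    have hexp : ∀ i : Fin N, ‖m i‖ ^ 2 = ‖a i‖ ^ 2 - 2 * ⟪a i, abar⟫ + ‖abar‖ ^ 2 :=
      fun i => by rw [hm]; exact norm_sub_sq_real _ _
    have h1 : ∑ i, ‖m i‖ ^ 2
        = ∑ i, ‖a i‖ ^ 2 - 2 * ⟪∑ i, a i, abar⟫ + (N : ℝ) * ‖abar‖ ^ 2 := by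
      simp_rw [hexp]
      rw [Finset.sum_add_distrib, Finset.sum_sub_distrib, Finset.sum_const,
        Finset.card_univ, Fintype.card_fin, sum_inner, ← Finset.mul_sum, nsmul_eq_mul]
    have h2 : ⟪∑ i, a i, abar⟫ = (N : ℝ) * ‖abar‖ ^ 2 := by
      rw [hsum_a, real_inner_smul_left, real_inner_self_eq_norm_sq]
    rw [h1, h2]
    nlinarith [sq_nonneg ‖abar‖, Nat.cast_nonneg (α := ℝ) N]
  -- the cross terms cancel on average
  have hT3 : ∑ idx : Fin S → Fin N, ‖∑ j, m (idx j)‖ ^ 2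
      = ∑ idx : Fin S → Fin N, ∑ j, ‖m (idx j)‖ ^ 2 := by
    have hexp : ∀ idx : Fin S → Fin N,
        ‖∑ j, m (idx j)‖ ^ 2 = ∑ j, ∑ k, ⟪m (idx j), m (idx k)⟫ := by
      intro idx
      rw [← real_inner_self_eq_norm_sq, sum_inner]
      exact Finset.sum_congr rfl fun j _ => inner_sum _ _ _
    simp_rw [hexp]
    calc ∑ idx : Fin S → Fin N, ∑ j, ∑ k, ⟪m (idx j), m (idx k)⟫
        = ∑ j, ∑ idx : Fin S → Fin N, ∑ k, ⟪m (idx j), m (idx k)⟫ := Finset.sum_comm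
      _ = ∑ j, ∑ k, ∑ idx : Fin S → Fin N, ⟪m (idx j), m (idx k)⟫ :=
          Finset.sum_congr rfl fun j _ => Finset.sum_comm
      _ = ∑ j, ∑ idx : Fin S → Fin N, ⟪m (idx j), m (idx j)⟫ := by
          refine Finset.sum_congr rfl fun j _ => ?_
          rw [← Finset.add_sum_erase _ _ (Finset.mem_univ j),
            Finset.sum_eq_zero (fun k hk =>
              sum_eval_pair hm0 (Ne.symm (Finset.mem_erase.mp hk).1)), add_zero]
      _ = ∑ idx : Fin S → Fin N, ∑ j, ‖m (idx j)‖ ^ 2 := by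
          rw [Finset.sum_comm]
          exact Finset.sum_congr rfl fun idx _ =>
            Finset.sum_congr rfl fun j _ => real_inner_self_eq_norm_sq _
  -- rewrite each integral
  have hIdx : ∀ idx : Fin S → Fin N,
      (∫ ω : (∀ j, Ω j),
          ‖(S : ℝ)⁻¹ • ∑ j : Fin S, C j (gradient (f (idx j)) x - hvec (idx j)) (ω j)
              + (N : ℝ)⁻¹ • ∑ i : Fin N, hvec i
              - gradient (fun y => (N : ℝ)⁻¹ * ∑ k : Fin N, f k y) x‖ ^ 2
          ∂(Measure.pi μ))
        = ((S : ℝ)⁻¹) ^ 2 * (∑ j, Q j (idx j) - ∑ j, ‖m (idx j)‖ ^ 2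
            + ‖∑ j, m (idx j)‖ ^ 2) := by
    intro idx
    calc (∫ ω : (∀ j, Ω j),
          ‖(S : ℝ)⁻¹ • ∑ j : Fin S, C j (gradient (f (idx j)) x - hvec (idx j)) (ω j)
              + (N : ℝ)⁻¹ • ∑ i : Fin N, hvec i
              - gradient (fun y => (N : ℝ)⁻¹ * ∑ k : Fin N, f k y) x‖ ^ 2
          ∂(Measure.pi μ))
        = ∫ ω : (∀ j, Ω j), ((S : ℝ)⁻¹) ^ 2
            * ‖∑ j : Fin S, (C j (a (idx j)) (ω j) - abar)‖ ^ 2 ∂(Measure.pi μ) :=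
          integral_congr_ae (Filter.Eventually.of_forall (hptw idx))
      _ = ((S : ℝ)⁻¹) ^ 2 * ∫ ω : (∀ j, Ω j),
            ‖∑ j : Fin S, (C j (a (idx j)) (ω j) - abar)‖ ^ 2 ∂(Measure.pi μ) :=
          integral_const_mul _ _
      _ = ((S : ℝ)⁻¹) ^ 2 * (∑ j, Q j (idx j) - ∑ j, ‖m (idx j)‖ ^ 2
            + ‖∑ j, m (idx j)‖ ^ 2) := by rw [hI idx]
  -- assemble
  have hstep2 : ∑ idx : Fin S → Fin N,
      (∑ j, Q j (idx j) - ∑ j, ‖m (idx j)‖ ^ 2 + ‖∑ j, m (idx j)‖ ^ 2)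
        = ∑ idx : Fin S → Fin N, ∑ j, Q j (idx j) := by
    rw [Finset.sum_add_distrib, Finset.sum_sub_distrib, hT3]
    ring
  have hstep3 : ∑ idx : Fin S → Fin N, ∑ j, Q j (idx j)
      = ∑ j : Fin S, (∑ i, Q j i) * (N : ℝ) ^ (S - 1) := by
    rw [Finset.sum_comm]
    exact Finset.sum_congr rfl fun j _ => sum_eval_single (Q j) j
  have hQbound : ∀ j : Fin S, ∑ i, Q j i ≤ (1 + w) * ∑ i, ‖a i‖ ^ 2 := by
    intro j
    calc ∑ i, Q j i ≤ ∑ i, (w * ‖a i‖ ^ 2 + ‖m i‖ ^ 2) :=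
          Finset.sum_le_sum fun i _ => hq j i
      _ = w * (∑ i, ‖a i‖ ^ 2) + ∑ i, ‖m i‖ ^ 2 := by
          rw [Finset.sum_add_distrib, Finset.mul_sum]
      _ ≤ w * (∑ i, ‖a i‖ ^ 2) + ∑ i, ‖a i‖ ^ 2 := by linarith
      _ = (1 + w) * ∑ i, ‖a i‖ ^ 2 := by ring
  have hpow : (0 : ℝ) ≤ (N : ℝ) ^ (S - 1) := by positivity
  calc ((N : ℝ) ^ S)⁻¹ * ∑ idx : Fin S → Fin N,
        (∫ ω : (∀ j, Ω j),
          ‖(S : ℝ)⁻¹ • ∑ j : Fin S, C j (gradient (f (idx j)) x - hvec (idx j)) (ω j)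
              + (N : ℝ)⁻¹ • ∑ i : Fin N, hvec i
              - gradient (fun y => (N : ℝ)⁻¹ * ∑ k : Fin N, f k y) x‖ ^ 2
          ∂(Measure.pi μ))
      = ((N : ℝ) ^ S)⁻¹ * (((S : ℝ)⁻¹) ^ 2
          * ∑ j : Fin S, (∑ i, Q j i) * (N : ℝ) ^ (S - 1)) := by
        rw [Finset.sum_congr rfl fun idx _ => hIdx idx, ← Finset.mul_sum, hstep2, hstep3]
    _ ≤ ((N : ℝ) ^ S)⁻¹ * (((S : ℝ)⁻¹) ^ 2
          * ∑ j : Fin S, ((1 + w) * ∑ i, ‖a i‖ ^ 2) * (N : ℝ) ^ (S - 1)) := by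
        have hle : ∑ j : Fin S, (∑ i, Q j i) * (N : ℝ) ^ (S - 1)
            ≤ ∑ j : Fin S, ((1 + w) * ∑ i, ‖a i‖ ^ 2) * (N : ℝ) ^ (S - 1) :=
          Finset.sum_le_sum fun j _ => mul_le_mul_of_nonneg_right (hQbound j) hpow
        have hc : (0 : ℝ) ≤ ((N : ℝ) ^ S)⁻¹ := by positivity
        have hc2 : (0 : ℝ) ≤ ((S : ℝ)⁻¹) ^ 2 := by positivity
        nlinarith [mul_le_mul_of_nonneg_left hle hc2,
          mul_le_mul_of_nonneg_left (mul_le_mul_of_nonneg_left hle hc2) hc]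
    _ = ((1 + w) / S) * ((N : ℝ)⁻¹ * ∑ i : Fin N, ‖a i‖ ^ 2) := by
        rw [Finset.sum_const, Finset.card_univ, Fintype.card_fin]
        have hNS : (N : ℝ) ^ S = (N : ℝ) ^ (S - 1) * N := by
          conv_lhs => rw [show S = (S - 1) + 1 from (Nat.succ_pred_eq_of_pos hS).symm]
          rw [pow_succ]
        rw [hNS, nsmul_eq_mul]
        have hpowne : ((N : ℝ) ^ (S - 1)) ≠ 0 := pow_ne_zero _ hNr
        field_simp
end

section
/- If each fᵢ is convex and L-smooth with common minimizer structure f = (1/N)∑fᵢ minimized at x*, then (1/N)∑ᵢ₌₁^N ‖∇fᵢ(x) − ∇fᵢ(x*)‖² ≤ 2L(f(x) − f(x*)) for all x. -/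
open scoped RealInnerProductSpace

variable {E : Type*} [NormedAddCommGroup E] [InnerProductSpace ℝ E] [CompleteSpace E]

lemma inner_gradient_eq (h : E → ℝ) (x v : E) :
    ⟪gradient h x, v⟫ = fderiv ℝ h x v := by
  simp [gradient, InnerProductSpace.toDual_symm_apply]

lemma hasDerivAt_comp_line (h : E → ℝ) (hd : Differentiable ℝ h) (c v : E) (t : ℝ) :
    HasDerivAt (fun s : ℝ => h (c + s • v)) ⟪gradient h (c + t • v), v⟫ t := by
  have h1 : HasDerivAt (fun s : ℝ => c + s • v) v t := by
    simpa using ((hasDerivAt_id t).smul_const v).const_add c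
  have h2 := (hd (c + t • v)).hasFDerivAt.comp_hasDerivAt t h1
  rw [inner_gradient_eq]
  exact h2

lemma convex_first_order (h : E → ℝ) (hd : Differentiable ℝ h)
    (hc : ConvexOn ℝ Set.univ h) (a b : E) :
    h a + ⟪gradient h a, b - a⟫ ≤ h b := by
  set g : ℝ → ℝ := fun t => h (a + t • (b - a)) with hg
  have hgc : ConvexOn ℝ Set.univ g := by
    have := hc.comp_affineMap (AffineMap.lineMap a b)
    have heq : g = h ∘ (AffineMap.lineMap a b) := by
      funext t
      simp only [hg, Function.comp_apply, AffineMap.lineMap_apply_module]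
      congr 1
      module
    rw [heq]
    simpa using this
  have hder : HasDerivAt g ⟪gradient h (a + (0:ℝ) • (b - a)), b - a⟫ 0 :=
    hasDerivAt_comp_line h hd a (b - a) 0
  have hslope := hgc.le_slope_of_hasDerivAt (Set.mem_univ (0:ℝ)) (Set.mem_univ (1:ℝ))
    one_pos hder
  have h0 : g 0 = h a := by simp [hg]
  have h1 : g 1 = h b := by simp [hg]
  rw [slope_def_field] at hslope
  simp only [h0, h1, zero_smul, add_zero] at hslope
  have : ⟪gradient h a, b - a⟫ ≤ h b - h a := by
    simpa [div_one] using hslope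
  linarith

lemma descent_lemma (h : E → ℝ) (hd : Differentiable ℝ h) {L : ℝ}
    (hlip : ∀ p q : E, ‖gradient h p - gradient h q‖ ≤ L * ‖p - q‖) (a b : E) :
    h b ≤ h a + ⟪gradient h a, b - a⟫ + L / 2 * ‖b - a‖ ^ 2 := by
  set v := b - a with hv
  set q : ℝ → ℝ := fun t =>
    h a + t * ⟪gradient h a, v⟫ + L / 2 * t ^ 2 * ‖v‖ ^ 2 - h (a + t • v) with hq
  have hqder : ∀ t : ℝ, HasDerivAt q
      (⟪gradient h a, v⟫ + L / 2 * (2 * t) * ‖v‖ ^ 2 - ⟪gradient h (a + t • v), v⟫) t := by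
    intro t
    have hpoly : HasDerivAt (fun s : ℝ => h a + s * ⟪gradient h a, v⟫ + L / 2 * s ^ 2 * ‖v‖ ^ 2)
        (⟪gradient h a, v⟫ + L / 2 * (2 * t) * ‖v‖ ^ 2) t := by
      have h1 : HasDerivAt (fun s : ℝ => h a + s * ⟪gradient h a, v⟫) ⟪gradient h a, v⟫ t := by
        simpa using ((hasDerivAt_id t).mul_const ⟪gradient h a, v⟫).const_add (h a)
      have h2 : HasDerivAt (fun s : ℝ => L / 2 * s ^ 2 * ‖v‖ ^ 2) (L / 2 * (2 * t) * ‖v‖ ^ 2) t := by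
        have := (hasDerivAt_pow 2 t).const_mul (L / 2)
        have := this.mul_const (‖v‖ ^ 2)
        simpa [mul_comm, mul_assoc, mul_left_comm] using this
      exact h1.fun_add h2
    exact hpoly.sub (hasDerivAt_comp_line h hd a v t)
  have hmono : MonotoneOn q (Set.Icc (0:ℝ) 1) := by
    apply monotoneOn_of_deriv_nonneg (convex_Icc 0 1)
    · exact fun t _ => ((hqder t).continuousAt).continuousWithinAt
    · intro t _
      exact ((hqder t).differentiableAt).differentiableWithinAt
    · intro t ht
      rw [interior_Icc] at ht
      rw [(hqder t).deriv]
      have hin : ⟪gradient h (a + t • v), v⟫ - ⟪gradient h a, v⟫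
          ≤ L * t * ‖v‖ ^ 2 := by
        rw [← inner_sub_left]
        calc ⟪gradient h (a + t • v) - gradient h a, v⟫
            ≤ ‖gradient h (a + t • v) - gradient h a‖ * ‖v‖ := real_inner_le_norm _ _
          _ ≤ (L * ‖(a + t • v) - a‖) * ‖v‖ := by
              exact mul_le_mul_of_nonneg_right (hlip _ _) (norm_nonneg _)
          _ = L * t * ‖v‖ ^ 2 := by
              rw [add_sub_cancel_left, norm_smul, Real.norm_eq_abs, abs_of_pos ht.1]
              ring
      nlinarith [hin]
  have hkey := hmono (Set.left_mem_Icc.2 zero_le_one) (Set.right_mem_Icc.2 zero_le_one)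
    zero_le_one
  have hq0 : q 0 = 0 := by simp [hq]
  have hq1 : q 1 = h a + ⟪gradient h a, v⟫ + L / 2 * ‖v‖ ^ 2 - h b := by
    simp [hq, hv]
  rw [hq0, hq1] at hkey
  linarith

lemma cocoercivity (h : E → ℝ) (hd : Differentiable ℝ h) (hc : ConvexOn ℝ Set.univ h)
    {L : ℝ} (hL : 0 < L)
    (hlip : ∀ p q : E, ‖gradient h p - gradient h q‖ ≤ L * ‖p - q‖) (x y : E) :
    ‖gradient h x - gradient h y‖ ^ 2 ≤ 2 * L * (h x - h y - ⟪gradient h y, x - y⟫) := by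
  set g := gradient h x - gradient h y with hgdef
  set b := x - L⁻¹ • g with hbdef
  have h1 := descent_lemma h hd hlip x b
  have h2 := convex_first_order h hd hc y b
  have hbx : b - x = -(L⁻¹ • g) := by rw [hbdef]; abel
  have hby : b - y = (x - y) - L⁻¹ • g := by rw [hbdef]; abel
  rw [hbx] at h1
  rw [hby] at h2
  rw [inner_neg_right, real_inner_smul_right] at h1
  rw [inner_sub_right, real_inner_smul_right] at h2
  have hnorm : ‖-(L⁻¹ • g)‖ ^ 2 = L⁻¹ ^ 2 * ‖g‖ ^ 2 := by
    rw [norm_neg, norm_smul, Real.norm_eq_abs, abs_of_pos (inv_pos.2 hL), mul_pow]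
  rw [hnorm] at h1
  have hsplit : ⟪gradient h x, g⟫ - ⟪gradient h y, g⟫ = ‖g‖ ^ 2 := by
    rw [← inner_sub_left, ← hgdef, real_inner_self_eq_norm_sq]
  have hLne : L ≠ 0 := ne_of_gt hL
  have h3 : L⁻¹ * (⟪gradient h x, g⟫ - ⟪gradient h y, g⟫) = L⁻¹ * ‖g‖ ^ 2 := by
    rw [hsplit]
  have key : L⁻¹ * ‖g‖ ^ 2 - L / 2 * (L⁻¹ ^ 2 * ‖g‖ ^ 2)
      ≤ h x - h y - ⟪gradient h y, x - y⟫ := by linarith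
  have e2 : L⁻¹ * ‖g‖ ^ 2 - L / 2 * (L⁻¹ ^ 2 * ‖g‖ ^ 2) = ‖g‖ ^ 2 / (2 * L) := by
    field_simp
    ring
  rw [e2, div_le_iff₀ (by positivity)] at key
  linarith

theorem avg_grad_diff_sq_le_two_L_gap {d N : ℕ} (hN : 0 < N)
    (f : Fin N → EuclideanSpace ℝ (Fin d) → ℝ) (L : ℝ)
    (hdiff : ∀ i, Differentiable ℝ (f i))
    (hconv : ∀ i, ConvexOn ℝ Set.univ (f i))
    (hsmooth : ∀ i x y, ‖gradient (f i) x - gradient (f i) y‖ ≤ L * ‖x - y‖)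
    (xstar : EuclideanSpace ℝ (Fin d))
    (hmin : ∀ y, (N : ℝ)⁻¹ * ∑ i : Fin N, f i xstar ≤ (N : ℝ)⁻¹ * ∑ i : Fin N, f i y)
    (x : EuclideanSpace ℝ (Fin d)) :
    (N : ℝ)⁻¹ * ∑ i : Fin N, ‖gradient (f i) x - gradient (f i) xstar‖ ^ 2
      ≤ 2 * L * ((N : ℝ)⁻¹ * ∑ i : Fin N, f i x - (N : ℝ)⁻¹ * ∑ i : Fin N, f i xstar) := by
  have hNpos : (0 : ℝ) < (N : ℝ)⁻¹ := by positivity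
  -- the sum of gradients at xstar annihilates every direction
  have hsumzero : ∀ v : EuclideanSpace ℝ (Fin d),
      ∑ i : Fin N, ⟪gradient (f i) xstar, v⟫ = 0 := by
    intro v
    set F : EuclideanSpace ℝ (Fin d) → ℝ := fun z => ∑ i : Fin N, f i z with hF
    have hFmin : ∀ y, F xstar ≤ F y := by
      intro y
      have := hmin y
      exact le_of_mul_le_mul_left (by simpa [hF] using this) hNpos
    have hFd : ∀ z, DifferentiableAt ℝ F z := fun z =>
      DifferentiableAt.fun_sum fun i _ => (hdiff i) z
    have hloc : IsLocalMin F xstar := Filter.Eventually.of_forall hFmin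
    have hfz : fderiv ℝ F xstar = 0 := hloc.fderiv_eq_zero
    have hfs : fderiv ℝ F xstar = ∑ i : Fin N, fderiv ℝ (f i) xstar :=
      fderiv_fun_sum fun i _ => (hdiff i) xstar
    calc ∑ i : Fin N, ⟪gradient (f i) xstar, v⟫
        = ∑ i : Fin N, fderiv ℝ (f i) xstar v :=
          Finset.sum_congr rfl fun i _ => inner_gradient_eq (f i) xstar v
      _ = (∑ i : Fin N, fderiv ℝ (f i) xstar) v := by
          rw [ContinuousLinearMap.sum_apply]
      _ = 0 := by rw [← hfs, hfz]; rfl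
  rcases le_or_gt L 0 with hL | hL
  · -- degenerate case: gradients are all constant, f is constant
    have hgeq : ∀ (i : Fin N) (p q : EuclideanSpace ℝ (Fin d)),
        gradient (f i) p = gradient (f i) q := by
      intro i p q
      have h1 := hsmooth i p q
      have h2 : L * ‖p - q‖ ≤ 0 := mul_nonpos_of_nonpos_of_nonneg hL (norm_nonneg _)
      have : ‖gradient (f i) p - gradient (f i) q‖ ≤ 0 := le_trans h1 h2
      have := le_antisymm this (norm_nonneg _)
      rwa [norm_eq_zero, sub_eq_zero] at this
    have hfeq : ∀ i : Fin N, f i x - f i xstar = ⟪gradient (f i) xstar, x - xstar⟫ := by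
      intro i
      have hA := convex_first_order (f i) (hdiff i) (hconv i) xstar x
      have hB := convex_first_order (f i) (hdiff i) (hconv i) x xstar
      rw [hgeq i x xstar] at hB
      have : xstar - x = -(x - xstar) := by abel
      rw [this, inner_neg_right] at hB
      linarith
    have hsx : ∑ i : Fin N, f i x = ∑ i : Fin N, f i xstar := by
      have : ∑ i : Fin N, (f i x - f i xstar) = 0 := by
        rw [Finset.sum_congr rfl fun i _ => hfeq i]
        exact hsumzero (x - xstar)
      rw [Finset.sum_sub_distrib] at this
      linarith
    have hgz : ∀ i : Fin N, ‖gradient (f i) x - gradient (f i) xstar‖ ^ 2 = 0 := by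
      intro i; rw [hgeq i x xstar]; simp
    rw [Finset.sum_congr rfl fun i _ => hgz i, hsx]
    simp
  · -- main case: 0 < L
    have hco : ∀ i : Fin N, ‖gradient (f i) x - gradient (f i) xstar‖ ^ 2
        ≤ 2 * L * (f i x - f i xstar - ⟪gradient (f i) xstar, x - xstar⟫) :=
      fun i => cocoercivity (f i) (hdiff i) (hconv i) hL (hsmooth i) x xstar
    have hsum : ∑ i : Fin N, ‖gradient (f i) x - gradient (f i) xstar‖ ^ 2
        ≤ 2 * L * (∑ i : Fin N, f i x - ∑ i : Fin N, f i xstar) := by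
      calc ∑ i : Fin N, ‖gradient (f i) x - gradient (f i) xstar‖ ^ 2
          ≤ ∑ i : Fin N, 2 * L * (f i x - f i xstar - ⟪gradient (f i) xstar, x - xstar⟫) :=
            Finset.sum_le_sum fun i _ => hco i
        _ = 2 * L * (∑ i : Fin N, f i x - ∑ i : Fin N, f i xstar) := by
            rw [← Finset.mul_sum]
            congr 1
            rw [Finset.sum_sub_distrib, Finset.sum_sub_distrib, hsumzero (x - xstar)]
            ring
    have := mul_le_mul_of_nonneg_left hsum (le_of_lt hNpos)
    calc (N : ℝ)⁻¹ * ∑ i : Fin N, ‖gradient (f i) x - gradient (f i) xstar‖ ^ 2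
        ≤ (N : ℝ)⁻¹ * (2 * L * (∑ i : Fin N, f i x - ∑ i : Fin N, f i xstar)) := this
      _ = 2 * L * ((N : ℝ)⁻¹ * ∑ i : Fin N, f i x - (N : ℝ)⁻¹ * ∑ i : Fin N, f i xstar) := by
          ring
end
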